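/- Let B : ℝ³ → ℝ³, τ : ℝ³ → ℝ, p : ℝ³ → ℝ be smooth fields with τ(x) < 1 for every x, div B = 0, and B · grad τ = 0. Suppose the field B̃ := √(1 − τ) B satisfies curl B̃ × B̃ = grad p everywhere. Then, setting p⊥ := p − τ |B|²/2, the triple (B, p⊥, τ) is a static anisotropic (CGL) plasma equilibrium, i.e. (1 − τ)(curl B) × B = grad p⊥ + τ grad(|B|²/2) + (B · grad τ) B, div B = 0, and B · grad τ = 0 on ℝ³. -/

import Mathlib

open Matrix

noncomputable section

abbrev R3 : Type := Fin 3 → ℝ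

/-- Partial derivative in the `i`-th coordinate direction. -/
def pd (i : Fin 3) (f : R3 → ℝ) (x : R3) : ℝ := fderiv ℝ f x (Pi.single i 1)

/-- Gradient of a scalar field on ℝ³. -/
def grad3 (f : R3 → ℝ) (x : R3) : R3 := fun i => pd i f x

/-- Divergence of a vector field on ℝ³. -/
def div3 (B : R3 → R3) (x : R3) : ℝ := ∑ i, pd i (fun y => B y i) x

/-- Curl of a vector field on ℝ³. -/
def curl3 (B : R3 → R3) (x : R3) : R3 :=
  ![pd 1 (fun y => B y 2) x - pd 2 (fun y => B y 1) x,
    pd 2 (fun y => B y 0) x - pd 0 (fun y => B y 2) x,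
    pd 0 (fun y => B y 1) x - pd 1 (fun y => B y 0) x]

lemma pd_add {f g : R3 → ℝ} {x : R3} (i : Fin 3)
    (hf : DifferentiableAt ℝ f x) (hg : DifferentiableAt ℝ g x) :
    pd i (fun y => f y + g y) x = pd i f x + pd i g x := by
  unfold pd; rw [fderiv_fun_add hf hg]; simp

lemma pd_sub {f g : R3 → ℝ} {x : R3} (i : Fin 3)
    (hf : DifferentiableAt ℝ f x) (hg : DifferentiableAt ℝ g x) :
    pd i (fun y => f y - g y) x = pd i f x - pd i g x := by
  unfold pd; rw [fderiv_fun_sub hf hg]; simp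

lemma pd_mul {f g : R3 → ℝ} {x : R3} (i : Fin 3)
    (hf : DifferentiableAt ℝ f x) (hg : DifferentiableAt ℝ g x) :
    pd i (fun y => f y * g y) x = pd i f x * g x + f x * pd i g x := by
  unfold pd; rw [fderiv_fun_mul hf hg]; simp; ring

lemma pd_div2 {f : R3 → ℝ} {x : R3} (i : Fin 3) (hf : DifferentiableAt ℝ f x) :
    pd i (fun y => f y / 2) x = pd i f x / 2 := by
  have h : (fun y => f y / 2) = fun y => f y * (1/2 : ℝ) := by funext y; ring
  rw [h, pd_mul i hf (differentiableAt_const _)]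
  unfold pd
  simp [fderiv_const]
  ring

lemma pd_sqrt {τ : R3 → ℝ} {x : R3} (i : Fin 3)
    (hτd : DifferentiableAt ℝ τ x) (h : τ x < 1) :
    pd i (fun y => Real.sqrt (1 - τ y)) x
      = -(pd i τ x) / (2 * Real.sqrt (1 - τ x)) := by
  have h1 : HasFDerivAt (fun y => 1 - τ y) ((0 : R3 →L[ℝ] ℝ) - fderiv ℝ τ x) x :=
    (hasFDerivAt_const (1:ℝ) x).sub hτd.hasFDerivAt
  have h2 : HasDerivAt Real.sqrt (1 / (2 * Real.sqrt (1 - τ x))) (1 - τ x) :=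
    Real.hasDerivAt_sqrt (by linarith)
  have h3 : HasFDerivAt (fun y => Real.sqrt (1 - τ y))
      ((1 / (2 * Real.sqrt (1 - τ x))) • ((0 : R3 →L[ℝ] ℝ) - fderiv ℝ τ x)) x :=
    h2.comp_hasFDerivAt x h1
  unfold pd
  rw [h3.fderiv]
  simp
  ring

/-- If `B̃ = √(1−τ) B` together with `p` solves the static isotropic (MHD)
equilibrium momentum equation, with `div B = 0`, `B·grad τ = 0`, `τ < 1`, then
`(B, p⊥, τ)` with `p⊥ = p − τ|B|²/2` is a static anisotropic (CGL) equilibrium. -/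
theorem mhd_to_cgl
    (B : R3 → R3) (τ p : R3 → ℝ)
    (hB : ContDiff ℝ (⊤ : ℕ∞) B) (hτ : ContDiff ℝ (⊤ : ℕ∞) τ) (hp : ContDiff ℝ (⊤ : ℕ∞) p)
    (hτlt : ∀ x, τ x < 1)
    (hdiv : ∀ x, div3 B x = 0)
    (hstate : ∀ x, B x ⬝ᵥ grad3 τ x = 0)
    (Bt : R3 → R3) (hBt : Bt = fun x => Real.sqrt (1 - τ x) • B x)
    (hmomt : ∀ x, crossProduct (curl3 Bt x) (Bt x) = grad3 p x)
    (pperp : R3 → ℝ) (hpperp : pperp = fun x => p x - τ x * (B x ⬝ᵥ B x) / 2) :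
    (∀ x, (1 - τ x) • crossProduct (curl3 B x) (B x) =
      grad3 pperp x + τ x • grad3 (fun y => (B y ⬝ᵥ B y) / 2) x + (B x ⬝ᵥ grad3 τ x) • B x) ∧
    (∀ x, div3 B x = 0) ∧ (∀ x, B x ⬝ᵥ grad3 τ x = 0) := by
  refine ⟨?_, hdiv, hstate⟩
  subst hBt hpperp
  intro x
  -- differentiability facts
  have hBd : ∀ (j : Fin 3) (y : R3), DifferentiableAt ℝ (fun z => B z j) y := fun j y =>
    ((contDiff_pi.mp hB j).differentiable (by simp)).differentiableAt
  have hτd : ∀ y : R3, DifferentiableAt ℝ τ y := fun y =>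
    (hτ.differentiable (by simp)).differentiableAt
  have hpd : ∀ y : R3, DifferentiableAt ℝ p y := fun y =>
    (hp.differentiable (by simp)).differentiableAt
  have hsd : ∀ y : R3, DifferentiableAt ℝ (fun z => Real.sqrt (1 - τ z)) y := fun y => by
    have h1 : (1 : ℝ) - τ y ≠ 0 := by have := hτlt y; linarith
    exact (Real.hasDerivAt_sqrt h1).differentiableAt.comp y ((differentiableAt_const (1:ℝ)).sub (hτd y))
  have hdotfun : ∀ z : R3, B z ⬝ᵥ B z = B z 0 * B z 0 + B z 1 * B z 1 + B z 2 * B z 2 := by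
    intro z; simp [dotProduct, Fin.sum_univ_three]
  have h1τ : (0:ℝ) < 1 - τ x := by linarith [hτlt x]
  set s := Real.sqrt (1 - τ x) with hs_def
  have hs : 0 < s := Real.sqrt_pos.mpr h1τ
  have hs2 : s * s = 1 - τ x := Real.mul_self_sqrt h1τ.le
  -- derivative of the components of Bt
  have hE : ∀ i j : Fin 3, 2 * s * pd i (fun y => Real.sqrt (1 - τ y) * B y j) x
      = -(pd i τ x) * B x j + 2 * (1 - τ x) * pd i (fun y => B y j) x := by
    intro i j
    rw [pd_mul i (hsd x) (hBd j x), pd_sqrt i (hτd x) (hτlt x), ← hs_def, ← hs2]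
    field_simp
  -- derivative of |B|²/2
  have hK : ∀ i : Fin 3, pd i (fun y => (B y ⬝ᵥ B y) / 2) x
      = B x 0 * pd i (fun z => B z 0) x + B x 1 * pd i (fun z => B z 1) x
        + B x 2 * pd i (fun z => B z 2) x := by
    intro i
    have h : (fun y => (B y ⬝ᵥ B y) / 2)
        = fun y => (B y 0 * B y 0 + B y 1 * B y 1 + B y 2 * B y 2) / 2 := by
      funext y; rw [hdotfun y]
    rw [h, pd_div2 (f := fun y => B y 0 * B y 0 + B y 1 * B y 1 + B y 2 * B y 2) i ((((hBd 0 x).mul (hBd 0 x)).add ((hBd 1 x).mul (hBd 1 x))).add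
      ((hBd 2 x).mul (hBd 2 x))),
      pd_add (f := fun y => B y 0 * B y 0 + B y 1 * B y 1) (g := fun y => B y 2 * B y 2) i (((hBd 0 x).mul (hBd 0 x)).add ((hBd 1 x).mul (hBd 1 x))) ((hBd 2 x).mul (hBd 2 x)),
      pd_add (f := fun y => B y 0 * B y 0) (g := fun y => B y 1 * B y 1) i ((hBd 0 x).mul (hBd 0 x)) ((hBd 1 x).mul (hBd 1 x)),
      pd_mul i (hBd 0 x) (hBd 0 x), pd_mul i (hBd 1 x) (hBd 1 x), pd_mul i (hBd 2 x) (hBd 2 x)]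
    ring
  -- differentiability of the kinetic term
  have hKd : DifferentiableAt ℝ (fun z => (B z ⬝ᵥ B z) / 2) x := by
    have h : (fun z => (B z ⬝ᵥ B z) / 2)
        = fun z => (B z 0 * B z 0 + B z 1 * B z 1 + B z 2 * B z 2) / 2 := by
      funext z; rw [hdotfun z]
    rw [h]
    have h2 : DifferentiableAt ℝ (fun z => B z 0 * B z 0 + B z 1 * B z 1 + B z 2 * B z 2) x :=
      (((hBd 0 x).mul (hBd 0 x)).add ((hBd 1 x).mul (hBd 1 x))).add ((hBd 2 x).mul (hBd 2 x))
    fun_prop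
  -- derivative of pperp
  have hP : ∀ i : Fin 3, pd i (fun y => p y - τ y * (B y ⬝ᵥ B y) / 2) x
      = pd i p x - (pd i τ x * ((B x ⬝ᵥ B x) / 2)
          + τ x * pd i (fun y => (B y ⬝ᵥ B y) / 2) x) := by
    intro i
    have h : (fun y => p y - τ y * (B y ⬝ᵥ B y) / 2)
        = fun y => p y - τ y * ((B y ⬝ᵥ B y) / 2) := by funext y; ring
    rw [h, pd_sub (g := fun y => τ y * ((B y ⬝ᵥ B y) / 2)) i (hpd x) ((hτd x).mul hKd), pd_mul i (hτd x) hKd]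
  -- state equation at x
  have hdot0 : B x 0 * pd 0 τ x + B x 1 * pd 1 τ x + B x 2 * pd 2 τ x = 0 := by
    have h := hstate x
    simpa [dotProduct, grad3, Fin.sum_univ_three] using h
  -- momentum equation components
  have hm := hmomt x
  rw [cross_apply] at hm
  have hm0 := congrFun hm 0
  have hm1 := congrFun hm 1
  have hm2 := congrFun hm 2
  simp only [curl3, grad3, Matrix.cons_val_zero, Matrix.cons_val_one, Matrix.head_cons,
    Matrix.cons_val_two, Matrix.tail_cons, Pi.smul_apply, smul_eq_mul, ← hs_def]
    at hm0 hm1 hm2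
  -- expand the goal
  rw [hstate x, zero_smul, add_zero, cross_apply]
  funext i
  fin_cases i <;>
    simp only [curl3, grad3, Matrix.cons_val_zero, Matrix.cons_val_one, Matrix.head_cons,
      Matrix.cons_val_two, Matrix.tail_cons, Pi.add_apply, Pi.smul_apply, smul_eq_mul,
      Fin.zero_eta, Fin.mk_one, Fin.reduceFinMk, Fin.isValue]
  · rw [hP 0, hK 0, hdotfun x]
    linear_combination hm0 - (B x 2/2) * hE 2 0 + (B x 2/2) * hE 0 2
      + (B x 1/2) * hE 0 1 - (B x 1/2) * hE 1 0 + (B x 0/2) * hdot0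
  · rw [hP 1, hK 1, hdotfun x]
    linear_combination hm1 - (B x 0/2) * hE 0 1 + (B x 0/2) * hE 1 0
      + (B x 2/2) * hE 1 2 - (B x 2/2) * hE 2 1 + (B x 1/2) * hdot0
  · rw [hP 2, hK 2, hdotfun x]
    linear_combination hm2 - (B x 1/2) * hE 1 2 + (B x 1/2) * hE 2 1
      + (B x 0/2) * hE 2 0 - (B x 0/2) * hE 0 2 + (B x 2/2) * hdot0
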